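/- arXiv:1911.02614 — 2 statements merged into one kernel-verified Lean document; each statement's English description precedes it below -/
import Mathlib

section
/- Let B be the Filipović space of the previous statement with inner product ⟨a,y⟩_α = a(0)y(0) + ∫_0^∞ a'(x)y'(x)α(x)dx. Fix Δ > 0 and define â(x) = 1 + (1/Δ)∫_0^x (Δ − min(Δ,z)) α(z)^{-1} dz. Then â ∈ B and ⟨â, y⟩_α = (1/Δ)∫_0^Δ y(x) dx for every y ∈ B, i.e. â represents the averaging functional y ↦ (1/Δ)∫_0^Δ y. -/
open MeasureTheory

/-- the averaging functional on the Filipović space. With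
`⟨a,y⟩_α = a(0)y(0) + ∫_0^∞ a'(x)y'(x)α(x)dx` and
`â(x) = 1 + (1/Δ)∫_0^x (Δ - min(Δ,z)) α(z)⁻¹ dz` (so `â(0) = 1` and
`â'(x) = Δ⁻¹(Δ - min(Δ,x))α(x)⁻¹`), `â` lies in the Filipović space `B` and
`⟨â, y⟩_α = (1/Δ)∫_0^Δ y(x)dx` for every `y ∈ B` (represented by `y(x) = y(0) + ∫_0^x g`). -/
theorem stmt_15 (α : ℝ → ℝ)
    (hα1 : ∀ x, 0 ≤ x → 1 ≤ α x)
    (hαmono : MonotoneOn α (Set.Ici 0))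
    (hαC1 : ContDiffOn ℝ 1 α (Set.Ici 0))
    (hαint : IntegrableOn (fun x => (α x)⁻¹) (Set.Ioi 0))
    (Δ : ℝ) (hΔ : 0 < Δ)
    (y g : ℝ → ℝ) (hg : Measurable g)
    (hrepr : ∀ x, 0 ≤ x → y x = y 0 + ∫ s in (0:ℝ)..x, g s)
    (hgint : IntegrableOn (fun x => (g x) ^ 2 * α x) (Set.Ioi 0)) :
    IntegrableOn (fun x => (Δ⁻¹ * (Δ - min Δ x) * (α x)⁻¹) ^ 2 * α x) (Set.Ioi 0) ∧
    (fun x => 1 + ∫ s in (0:ℝ)..x, Δ⁻¹ * (Δ - min Δ s) * (α s)⁻¹) 0 = 1 ∧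
    Integrable (fun x => (Δ⁻¹ * (Δ - min Δ x) * (α x)⁻¹) * g x * α x)
      (volume.restrict (Set.Ioi (0:ℝ))) ∧
    (1 * y 0 + ∫ x in Set.Ioi (0:ℝ), (Δ⁻¹ * (Δ - min Δ x) * (α x)⁻¹) * g x * α x)
      = Δ⁻¹ * ∫ x in (0:ℝ)..Δ, y x := by
  have hIoc : Set.Ioc (0:ℝ) Δ ⊆ Set.Ioi 0 := Set.Ioc_subset_Ioi_self
  have hαpos : ∀ x : ℝ, 0 ≤ x → 0 < α x := fun x hx => lt_of_lt_of_le one_pos (hα1 x hx)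
  have hαcont : ContinuousOn α (Set.Ioi 0) :=
    (hαC1.continuousOn).mono (Set.Ioi_subset_Ici le_rfl)
  have hmin : Continuous fun x : ℝ => Δ - min Δ x :=
    continuous_const.sub (continuous_const.min continuous_id)
  -- bounds on the coefficient
  have hcoef : ∀ x : ℝ, 0 < x → 0 ≤ Δ⁻¹ * (Δ - min Δ x) ∧ Δ⁻¹ * (Δ - min Δ x) ≤ 1 := by
    intro x hx
    have h1 : min Δ x ≤ Δ := min_le_left _ _
    have h2 : 0 ≤ min Δ x := le_min hΔ.le hx.le
    constructor
    · exact mul_nonneg (inv_nonneg.2 hΔ.le) (by linarith)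
    · calc Δ⁻¹ * (Δ - min Δ x) ≤ Δ⁻¹ * Δ := by
            exact mul_le_mul_of_nonneg_left (by linarith) (inv_nonneg.2 hΔ.le)
        _ = 1 := inv_mul_cancel₀ hΔ.ne'
  -- Part 1
  have part1 : IntegrableOn (fun x => (Δ⁻¹ * (Δ - min Δ x) * (α x)⁻¹) ^ 2 * α x)
      (Set.Ioi 0) := by
    have hcont : ContinuousOn (fun x => (Δ⁻¹ * (Δ - min Δ x) * (α x)⁻¹) ^ 2 * α x)
        (Set.Ioi 0) := by
      apply ContinuousOn.mul _ hαcont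
      exact (ContinuousOn.mul (continuous_const.mul hmin).continuousOn
        (hαcont.inv₀ fun x hx => (hαpos x (le_of_lt hx)).ne')).pow 2
    apply Integrable.mono' hαint (hcont.aestronglyMeasurable measurableSet_Ioi)
    filter_upwards [ae_restrict_mem measurableSet_Ioi] with x hx
    have hα := hαpos x (le_of_lt hx)
    obtain ⟨hc0, hc1⟩ := hcoef x hx
    have heq : (Δ⁻¹ * (Δ - min Δ x) * (α x)⁻¹) ^ 2 * α x
        = (Δ⁻¹ * (Δ - min Δ x)) ^ 2 * (α x)⁻¹ := by
      field_simp
    rw [Real.norm_eq_abs, heq, abs_of_nonneg (by positivity)]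
    have : (Δ⁻¹ * (Δ - min Δ x)) ^ 2 ≤ 1 := by nlinarith
    exact mul_le_of_le_one_left (inv_nonneg.2 hα.le) this
  -- g is integrable on (0,Δ]
  have hgIoc : IntegrableOn g (Set.Ioc 0 Δ) := by
    have hb : IntegrableOn (fun x => ((g x) ^ 2 * α x + 1) / 2) (Set.Ioc 0 Δ) :=
      ((hgint.mono_set hIoc).add
        (integrableOn_const measure_Ioc_lt_top.ne)).div_const 2
    apply Integrable.mono' hb (hg.aestronglyMeasurable.restrict)
    filter_upwards [ae_restrict_mem measurableSet_Ioc] with x hx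
    have hα := hα1 x hx.1.le
    rw [Real.norm_eq_abs]
    nlinarith [sq_nonneg (|g x| - 1), sq_abs (g x), sq_nonneg (g x)]
  -- the simplified integrand
  set h : ℝ → ℝ := fun x => Δ⁻¹ * (Δ - min Δ x) * g x with hh
  have hhm : Measurable h := (hmin.measurable.const_mul Δ⁻¹).mul hg
  have hhzero : ∀ x : ℝ, Δ < x → h x = 0 := by
    intro x hx
    simp [hh, min_eq_left hx.le]
  have hhIoc : IntegrableOn h (Set.Ioc 0 Δ) := by
    apply Integrable.mono' hgIoc.abs hhm.aestronglyMeasurable.restrict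
    filter_upwards [ae_restrict_mem measurableSet_Ioc] with x hx
    obtain ⟨hc0, hc1⟩ := hcoef x hx.1
    rw [Real.norm_eq_abs, hh, abs_mul]
    exact mul_le_of_le_one_left (abs_nonneg _) (by rwa [abs_of_nonneg hc0])
  have hhIoi : IntegrableOn h (Set.Ioi 0) := by
    have : Set.Ioi (0:ℝ) = Set.Ioc 0 Δ ∪ Set.Ioi Δ := (Set.Ioc_union_Ioi_eq_Ioi hΔ.le).symm
    rw [this]
    apply hhIoc.union
    apply (integrable_zero _ _ _).congr
    filter_upwards [ae_restrict_mem measurableSet_Ioi] with x hx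
    exact (hhzero x hx).symm
  -- a.e. equality of the integrands on (0,∞)
  have haeeq : ∀ x ∈ Set.Ioi (0:ℝ),
      (Δ⁻¹ * (Δ - min Δ x) * (α x)⁻¹) * g x * α x = h x := by
    intro x hx
    have := (hαpos x (le_of_lt hx)).ne'
    field_simp [hh]
    simp only [hh]; linear_combination (-(Δ - min Δ x) * g x) * mul_inv_cancel₀ hΔ.ne'
  -- Part 3
  have part3 : Integrable (fun x => (Δ⁻¹ * (Δ - min Δ x) * (α x)⁻¹) * g x * α x)
      (volume.restrict (Set.Ioi (0:ℝ))) := by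
    apply hhIoi.congr
    filter_upwards [ae_restrict_mem measurableSet_Ioi] with x hx
    exact (haeeq x hx).symm
  -- Fubini on the triangle
  set F : ℝ → ℝ → ℝ := fun x s => if s ≤ x then g s else 0 with hF
  have hFm : Measurable (Function.uncurry F) := by
    apply Measurable.ite (measurableSet_le measurable_snd measurable_fst)
      (hg.comp measurable_snd) measurable_const
  have hFint : Integrable (Function.uncurry F)
      ((volume.restrict (Set.Ioc 0 Δ)).prod (volume.restrict (Set.Ioc 0 Δ))) := by
    have hbint : Integrable (fun p : ℝ × ℝ => |g p.2|)
        ((volume.restrict (Set.Ioc 0 Δ)).prod (volume.restrict (Set.Ioc 0 Δ))) := by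
      have h1 : Integrable (fun s => |g s|)
          ((volume.restrict (Set.Ioc (0:ℝ) Δ)) Set.univ • volume.restrict (Set.Ioc (0:ℝ) Δ)) := by
        apply Integrable.smul_measure hgIoc.abs
        rw [Measure.restrict_apply_univ]
        exact measure_Ioc_lt_top.ne
      rw [← Measure.map_snd_prod] at h1
      have h2 := (integrable_map_measure (hg.abs.aestronglyMeasurable)
        measurable_snd.aemeasurable).1 h1
      exact h2
    apply Integrable.mono' hbint hFm.aestronglyMeasurable
    apply ae_of_all
    rintro ⟨x, s⟩
    show ‖if s ≤ x then g s else 0‖ ≤ |g s|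
    rw [Real.norm_eq_abs]
    split
    · exact le_refl _
    · simp [abs_nonneg]
  have hswap := integral_integral_swap hFint
  -- inner integral computations
  have hinner1 : ∀ x ∈ Set.Ioc (0:ℝ) Δ,
      (∫ s in Set.Ioc (0:ℝ) Δ, F x s) = ∫ s in Set.Ioc (0:ℝ) x, g s := by
    intro x hx
    have : (fun s => F x s) = (Set.Iic x).indicator g := by
      funext s; simp [hF, Set.indicator_apply, Set.mem_Iic]
    have hxs : Set.Ioc (0:ℝ) Δ ∩ Set.Iic x = Set.Ioc 0 x := by
      ext s
      simp only [Set.mem_inter_iff, Set.mem_Ioc, Set.mem_Iic]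
      constructor
      · rintro ⟨⟨h1, _⟩, h3⟩; exact ⟨h1, h3⟩
      · rintro ⟨h1, h2⟩; exact ⟨⟨h1, h2.trans hx.2⟩, h2⟩
    rw [this, setIntegral_indicator measurableSet_Iic, hxs]
  have hinner2 : ∀ s ∈ Set.Ioc (0:ℝ) Δ,
      (∫ x in Set.Ioc (0:ℝ) Δ, F x s) = (Δ - s) * g s := by
    intro s hs
    have : (fun x => F x s) = (Set.Ici s).indicator (fun _ => g s) := by
      funext x; simp [hF, Set.indicator_apply, Set.mem_Ici]
    rw [this, setIntegral_indicator measurableSet_Ici]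
    have hset : Set.Ioc (0:ℝ) Δ ∩ Set.Ici s = Set.Icc s Δ := by
      ext x
      simp only [Set.mem_inter_iff, Set.mem_Ioc, Set.mem_Ici, Set.mem_Icc]
      constructor
      · rintro ⟨⟨_, h2⟩, h3⟩; exact ⟨h3, h2⟩
      · rintro ⟨h1, h2⟩; exact ⟨⟨lt_of_lt_of_le hs.1 h1, h2⟩, h1⟩
    rw [hset, setIntegral_const, Real.volume_real_Icc_of_le (by linarith [hs.2]), smul_eq_mul]
  have hfub : (∫ x in Set.Ioc (0:ℝ) Δ, ∫ s in Set.Ioc (0:ℝ) x, g s)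
      = ∫ s in Set.Ioc (0:ℝ) Δ, (Δ - s) * g s := by
    rw [← setIntegral_congr_fun measurableSet_Ioc hinner1, hswap,
      setIntegral_congr_fun measurableSet_Ioc hinner2]
  -- integrability of the inner integral
  have hFinner : IntegrableOn (fun x => ∫ s in Set.Ioc (0:ℝ) x, g s) (Set.Ioc 0 Δ) := by
    apply (hFint.integral_prod_left).congr
    filter_upwards [ae_restrict_mem measurableSet_Ioc] with x hx
    exact hinner1 x hx
  refine ⟨part1, by simp, part3, ?_⟩
  -- LHS
  have hL : (∫ x in Set.Ioi (0:ℝ), (Δ⁻¹ * (Δ - min Δ x) * (α x)⁻¹) * g x * α x)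
      = Δ⁻¹ * ∫ s in Set.Ioc (0:ℝ) Δ, (Δ - s) * g s := by
    rw [setIntegral_congr_fun measurableSet_Ioi haeeq]
    have hsplit : Set.Ioi (0:ℝ) = Set.Ioc 0 Δ ∪ Set.Ioi Δ := (Set.Ioc_union_Ioi_eq_Ioi hΔ.le).symm
    rw [hsplit, setIntegral_union (Set.Ioc_disjoint_Ioi le_rfl) measurableSet_Ioi hhIoc
      (by
        apply (integrable_zero _ _ _).congr
        filter_upwards [ae_restrict_mem measurableSet_Ioi] with x hx
        exact (hhzero x hx).symm)]
    have : (∫ x in Set.Ioi Δ, h x) = 0 := by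
      rw [setIntegral_congr_fun measurableSet_Ioi (fun x hx => hhzero x hx)]
      simp
    rw [this, add_zero]
    have : ∀ x ∈ Set.Ioc (0:ℝ) Δ, h x = Δ⁻¹ * ((Δ - x) * g x) := by
      intro x hx
      rw [hh]
      simp only [min_eq_right hx.2]
      ring
    rw [setIntegral_congr_fun measurableSet_Ioc this, integral_const_mul]
  -- RHS
  have hR : (∫ x in (0:ℝ)..Δ, y x)
      = Δ * y 0 + ∫ s in Set.Ioc (0:ℝ) Δ, (Δ - s) * g s := by
    rw [intervalIntegral.integral_of_le hΔ.le]
    have hyeq : ∀ x ∈ Set.Ioc (0:ℝ) Δ, y x = y 0 + ∫ s in Set.Ioc (0:ℝ) x, g s := by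
      intro x hx
      rw [hrepr x hx.1.le, intervalIntegral.integral_of_le hx.1.le]
    rw [setIntegral_congr_fun measurableSet_Ioc hyeq,
      integral_add (integrableOn_const (C := y 0) measure_Ioc_lt_top.ne) hFinner,
      setIntegral_const, hfub, Real.volume_real_Ioc_of_le (by linarith), smul_eq_mul,
      sub_zero]
  rw [hL, hR, one_mul, mul_add, ← mul_assoc, inv_mul_cancel₀ hΔ.ne', one_mul]
end

section
/- In the rough Bergomi model with kernel K(x) = x^{H−1/2}, H ∈ (0,1/2), the k-th VIX moment satisfies the two-sided log-normal bounds: (VIX²_{0,t})^k exp( (k(k−1)/2) ∫_0^t (Δ+τ)^{2H−1} dτ ) ≤ E[(VIX_t²)^k | λ_0] ≤ (VIX²_{0,t})^k exp( (k(k−1)/2) ∫_0^t τ^{2H−1} dτ ), where VIX²_{0,t} = (1/Δ)∫_0^Δ λ_0(x+t)dx, assuming λ_0 ≥ 0 and the moment formula E[(VIX_t²)^k|λ_0] = Δ^{-k}∫_{[0,Δ]^k} Π_i λ_0(x_i+t) exp(Σ_{i<j}∫_0^t ((x_i+τ)(x_j+τ))^{H−1/2} dτ) dx. -/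
open MeasureTheory
open scoped BigOperators



lemma aux_restrict_pi (k : ℕ) {s : Set ℝ} (hs : MeasurableSet s) :
    (volume : Measure (Fin k → ℝ)).restrict (Set.univ.pi fun _ => s) =
      Measure.pi fun _ => (volume : Measure ℝ).restrict s := by
  refine (Measure.pi_eq fun w hw => ?_).symm
  rw [Measure.restrict_apply (MeasurableSet.univ_pi hw), ← Set.pi_inter_distrib,
    volume_pi_pi]
  exact Finset.prod_congr rfl fun i _ => (Measure.restrict_apply (hw i)).symm

lemma aux_pi_integrable {E : Type*} [MeasurableSpace E] (μ : Measure E) [SigmaFinite μ]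
    (k : ℕ) {g : E → ℝ} (hg : Integrable g μ) :
    Integrable (fun x : Fin k → E => ∏ i, g (x i)) (Measure.pi fun _ => μ) := by
  letI : MeasureSpace E := ⟨μ⟩
  exact Integrable.fintype_prod (f := fun _ => g) fun _ => hg

lemma aux_pi_integral {E : Type*} [MeasurableSpace E] (μ : Measure E) [SigmaFinite μ]
    (k : ℕ) (g : E → ℝ) :
    ∫ x : Fin k → E, (∏ i, g (x i)) ∂(Measure.pi fun _ => μ) = (∫ x, g x ∂μ) ^ k := by
  letI : MeasureSpace E := ⟨μ⟩
  simpa using MeasureTheory.integral_fintype_prod_eq_pow (ι := Fin k) g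

lemma aux_card_pairs (k : ℕ) :
    (((Finset.univ.filter fun p : Fin k × Fin k => p.1 < p.2).card : ℝ)) =
      (k : ℝ) * ((k : ℝ) - 1) / 2 := by
  have h1 : (Finset.univ.filter fun p : Fin k × Fin k => p.1 < p.2).card
      = ∑ j : Fin k, (j : ℕ) := by
    rw [Finset.card_filter, Fintype.sum_prod_type_right]
    refine Finset.sum_congr rfl fun j _ => ?_
    rw [← Finset.card_filter]
    simpa using Fin.card_Iio (b := j) ▸ congrArg Finset.card (by ext i; simp)
  have h2 : ∑ j : Fin k, (j : ℕ) = k.choose 2 := by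
    rw [Fin.sum_univ_eq_sum_range (fun i => i) k, Finset.sum_range_id, Nat.choose_two_right]
  rw [h1, h2, Nat.cast_choose_two]

lemma aux_pair_bounds (H Δ t : ℝ) (hH : H ∈ Set.Ioo (0:ℝ) (1/2)) (hΔ : 0 < Δ) (ht : 0 < t)
    {a b : ℝ} (ha : a ∈ Set.Icc (0:ℝ) Δ) (hb : b ∈ Set.Icc (0:ℝ) Δ) :
    (∫ τ in (0:ℝ)..t, (Δ + τ) ^ (2*H-1)) ≤ (∫ τ in (0:ℝ)..t, ((a+τ)*(b+τ)) ^ (H-1/2)) ∧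
    (∫ τ in (0:ℝ)..t, ((a+τ)*(b+τ)) ^ (H-1/2)) ≤ ∫ τ in (0:ℝ)..t, τ ^ (2*H-1) := by
  obtain ⟨hH0, hH2⟩ := hH
  have hexp : H - 1/2 ≤ 0 := by linarith
  have h2 : (-1:ℝ) < 2*H - 1 := by linarith
  have key : ∀ τ : ℝ, 0 < τ →
      (Δ+τ) ^ (2*H-1) ≤ ((a+τ)*(b+τ)) ^ (H-1/2) ∧
      ((a+τ)*(b+τ)) ^ (H-1/2) ≤ τ ^ (2*H-1) := by
    intro τ hτ
    have ha1 : 0 < a + τ := by linarith [ha.1]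
    have hb1 : 0 < b + τ := by linarith [hb.1]
    have hΔτ : 0 < Δ + τ := by linarith
    have hprod : ((a+τ)*(b+τ)) ^ (H-1/2) = (a+τ) ^ (H-1/2) * (b+τ) ^ (H-1/2) :=
      Real.mul_rpow ha1.le hb1.le
    have e1 : τ ^ (2*H-1) = τ ^ (H-1/2) * τ ^ (H-1/2) := by
      rw [← Real.rpow_add hτ]; congr 1; ring
    have e2 : (Δ+τ) ^ (2*H-1) = (Δ+τ) ^ (H-1/2) * (Δ+τ) ^ (H-1/2) := by
      rw [← Real.rpow_add hΔτ]; congr 1; ring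
    constructor
    · rw [e2, hprod]
      exact mul_le_mul (Real.rpow_le_rpow_of_nonpos ha1 (by linarith [ha.2]) hexp)
        (Real.rpow_le_rpow_of_nonpos hb1 (by linarith [hb.2]) hexp)
        (Real.rpow_nonneg hΔτ.le _) (Real.rpow_nonneg ha1.le _)
    · rw [e1, hprod]
      exact mul_le_mul (Real.rpow_le_rpow_of_nonpos hτ (by linarith [ha.1]) hexp)
        (Real.rpow_le_rpow_of_nonpos hτ (by linarith [hb.1]) hexp)
        (Real.rpow_nonneg hb1.le _) (Real.rpow_nonneg hτ.le _)
  have hgm : Measurable fun τ : ℝ => ((a+τ)*(b+τ)) ^ (H-1/2) :=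
    by fun_prop
  have hBint : IntervalIntegrable (fun τ : ℝ => τ ^ (2*H-1)) volume 0 t :=
    intervalIntegral.intervalIntegrable_rpow' h2
  have hAint : IntervalIntegrable (fun τ : ℝ => (Δ+τ) ^ (2*H-1)) volume 0 t := by
    apply ContinuousOn.intervalIntegrable
    apply ContinuousOn.rpow_const (continuousOn_const.add continuousOn_id)
    intro x hx
    rw [Set.uIcc_of_le ht.le] at hx
    exact Or.inl (ne_of_gt (show 0 < Δ + x by linarith [hx.1]))
  have hGint : IntervalIntegrable (fun τ : ℝ => ((a+τ)*(b+τ)) ^ (H-1/2)) volume 0 t := by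
    rw [intervalIntegrable_iff_integrableOn_Ioc_of_le ht.le]
    refine Integrable.mono ((intervalIntegrable_iff_integrableOn_Ioc_of_le ht.le).1 hBint)
      hgm.aestronglyMeasurable ?_
    refine (ae_restrict_iff' measurableSet_Ioc).2 (ae_of_all _ fun τ hτ => ?_)
    have h1 : 0 ≤ ((a+τ)*(b+τ)) ^ (H-1/2) :=
      Real.rpow_nonneg (mul_nonneg (by linarith [ha.1, hτ.1]) (by linarith [hb.1, hτ.1])) _
    rw [Real.norm_eq_abs, Real.norm_eq_abs, abs_of_nonneg h1,
      abs_of_nonneg (Real.rpow_nonneg hτ.1.le _)]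
    exact (key τ hτ.1).2
  have hvol : ∀ᵐ τ : ℝ ∂(volume : Measure ℝ), τ ≠ 0 := by
    have h0 : (volume : Measure ℝ) {0} = 0 := measure_singleton 0
    exact (MeasureTheory.ae_iff).2 (by simpa using h0)
  have hne : ∀ᵐ τ : ℝ ∂((volume : Measure ℝ).restrict (Set.Icc 0 t)), τ ≠ 0 :=
    hvol.filter_mono (ae_mono Measure.restrict_le_self)
  constructor
  · refine intervalIntegral.integral_mono_ae_restrict ht.le hAint hGint ?_
    filter_upwards [ae_restrict_mem measurableSet_Icc, hne] with τ hmem hτ0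
    exact (key τ (lt_of_le_of_ne hmem.1 (Ne.symm hτ0))).1
  · refine intervalIntegral.integral_mono_ae_restrict ht.le hGint hBint ?_
    filter_upwards [ae_restrict_mem measurableSet_Icc, hne] with τ hmem hτ0
    exact (key τ (lt_of_le_of_ne hmem.1 (Ne.symm hτ0))).2

/-- two-sided log-normal bounds for VIX moments in the rough Bergomi model with
kernel `K(x) = x^{H-1/2}`, `H ∈ (0,1/2)`. Assuming `λ_0 ≥ 0` and the moment formula
`E[(VIX_t²)^k|λ_0] = Δ^{-k}∫_{[0,Δ]^k} Π_i λ_0(x_i+t) exp(Σ_{i<j}∫_0^t ((x_i+τ)(x_j+τ))^{H-1/2}dτ)dx`,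
one has
`(VIX²_{0,t})^k exp((k(k-1)/2)∫_0^t (Δ+τ)^{2H-1}dτ) ≤ E[(VIX_t²)^k|λ_0]
  ≤ (VIX²_{0,t})^k exp((k(k-1)/2)∫_0^t τ^{2H-1}dτ)`,
where `VIX²_{0,t} = (1/Δ)∫_0^Δ λ_0(x+t)dx`. -/
theorem stmt_17 (k : ℕ) (H Δ t : ℝ) (hH : H ∈ Set.Ioo (0:ℝ) (1/2)) (hΔ : 0 < Δ) (ht : 0 < t)
    (lam0 : ℝ → ℝ) (hlam0 : ∀ x, 0 ≤ lam0 x) (hmeas : Measurable lam0)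
    (hint1 : IntegrableOn (fun x => lam0 (x + t)) (Set.Icc 0 Δ))
    (hintk : IntegrableOn (fun x : Fin k → ℝ =>
        (∏ i, lam0 (x i + t)) *
          Real.exp (∑ p ∈ Finset.univ.filter (fun p : Fin k × Fin k => p.1 < p.2),
            ∫ τ in (0:ℝ)..t, ((x p.1 + τ) * (x p.2 + τ)) ^ (H - 1/2)))
        (Set.univ.pi fun _ : Fin k => Set.Icc (0:ℝ) Δ))
    (E : ℝ)
    (hE : E = Δ⁻¹ ^ k * ∫ x in (Set.univ.pi fun _ : Fin k => Set.Icc (0:ℝ) Δ),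
      (∏ i, lam0 (x i + t)) *
        Real.exp (∑ p ∈ Finset.univ.filter (fun p : Fin k × Fin k => p.1 < p.2),
          ∫ τ in (0:ℝ)..t, ((x p.1 + τ) * (x p.2 + τ)) ^ (H - 1/2))) :
    (Δ⁻¹ * ∫ x in (0:ℝ)..Δ, lam0 (x + t)) ^ k *
        Real.exp ((k : ℝ) * ((k : ℝ) - 1) / 2 * ∫ τ in (0:ℝ)..t, (Δ + τ) ^ (2 * H - 1)) ≤ E ∧
    E ≤ (Δ⁻¹ * ∫ x in (0:ℝ)..Δ, lam0 (x + t)) ^ k *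
        Real.exp ((k : ℝ) * ((k : ℝ) - 1) / 2 * ∫ τ in (0:ℝ)..t, τ ^ (2 * H - 1)) := by
  set cube : Set (Fin k → ℝ) := Set.univ.pi fun _ : Fin k => Set.Icc (0:ℝ) Δ with hcube_def
  have hcube : MeasurableSet cube := MeasurableSet.univ_pi fun _ => measurableSet_Icc
  set N : ℕ := (Finset.univ.filter fun p : Fin k × Fin k => p.1 < p.2).card with hN_def
  set A : ℝ := ∫ τ in (0:ℝ)..t, (Δ + τ) ^ (2 * H - 1) with hA_def
  set B : ℝ := ∫ τ in (0:ℝ)..t, τ ^ (2 * H - 1) with hB_def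
  set P : ℝ := ∫ x in Set.Icc (0:ℝ) Δ, lam0 (x + t) with hP_def
  have hPline : (∫ x in (0:ℝ)..Δ, lam0 (x + t)) = P := by
    rw [intervalIntegral.integral_of_le hΔ.le, hP_def, integral_Icc_eq_integral_Ioc]
  -- exponent sum bounds
  have hSbound : ∀ x : Fin k → ℝ, x ∈ cube →
      (N : ℝ) * A ≤ (∑ p ∈ Finset.univ.filter (fun p : Fin k × Fin k => p.1 < p.2),
        ∫ τ in (0:ℝ)..t, ((x p.1 + τ) * (x p.2 + τ)) ^ (H - 1/2)) ∧
      (∑ p ∈ Finset.univ.filter (fun p : Fin k × Fin k => p.1 < p.2),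
        ∫ τ in (0:ℝ)..t, ((x p.1 + τ) * (x p.2 + τ)) ^ (H - 1/2)) ≤ (N : ℝ) * B := by
    intro x hx
    have hmem : ∀ i, x i ∈ Set.Icc (0:ℝ) Δ := fun i => hx i (Set.mem_univ i)
    constructor
    · have := Finset.card_nsmul_le_sum
        (Finset.univ.filter fun p : Fin k × Fin k => p.1 < p.2)
        (fun p => ∫ τ in (0:ℝ)..t, ((x p.1 + τ) * (x p.2 + τ)) ^ (H - 1/2)) A
        (fun p _ => (aux_pair_bounds H Δ t hH hΔ ht (hmem p.1) (hmem p.2)).1)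
      simpa [nsmul_eq_mul] using this
    · have := Finset.sum_le_card_nsmul
        (Finset.univ.filter fun p : Fin k × Fin k => p.1 < p.2)
        (fun p => ∫ τ in (0:ℝ)..t, ((x p.1 + τ) * (x p.2 + τ)) ^ (H - 1/2)) B
        (fun p _ => (aux_pair_bounds H Δ t hH hΔ ht (hmem p.1) (hmem p.2)).2)
      simpa [nsmul_eq_mul] using this
  have hprod_int : IntegrableOn (fun x : Fin k → ℝ => ∏ i, lam0 (x i + t)) cube := by
    rw [IntegrableOn, hcube_def, aux_restrict_pi k measurableSet_Icc]
    have := aux_pi_integrable (E := ℝ) ((volume : Measure ℝ).restrict (Set.Icc (0:ℝ) Δ)) k (g := fun x => lam0 (x + t)) hint1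
    exact this
  have hprod_integral : (∫ x in cube, ∏ i, lam0 (x i + t)) = P ^ k := by
    rw [hcube_def]
    rw [show ((volume : Measure (Fin k → ℝ)).restrict (Set.univ.pi fun _ => Set.Icc (0:ℝ) Δ))
        = Measure.pi fun _ => (volume : Measure ℝ).restrict (Set.Icc (0:ℝ) Δ) from
        aux_restrict_pi k measurableSet_Icc]
    exact aux_pi_integral ((volume : Measure ℝ).restrict (Set.Icc (0:ℝ) Δ)) k (fun x => lam0 (x + t))
  have hprodnn : ∀ x : Fin k → ℝ, 0 ≤ ∏ i, lam0 (x i + t) :=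
    fun x => Finset.prod_nonneg fun i _ => hlam0 _
  have hΔk : (0:ℝ) ≤ Δ⁻¹ ^ k := pow_nonneg (inv_nonneg.2 hΔ.le) k
  have hcast : (N : ℝ) = (k : ℝ) * ((k : ℝ) - 1) / 2 := aux_card_pairs k
  constructor
  · -- lower bound
    have hlow : ∫ x in cube, (∏ i, lam0 (x i + t)) * Real.exp ((N : ℝ) * A) ≤
        ∫ x in cube, (∏ i, lam0 (x i + t)) *
          Real.exp (∑ p ∈ Finset.univ.filter (fun p : Fin k × Fin k => p.1 < p.2),
            ∫ τ in (0:ℝ)..t, ((x p.1 + τ) * (x p.2 + τ)) ^ (H - 1/2)) := by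
      refine setIntegral_mono_on (hprod_int.mul_const _) hintk hcube fun x hx => ?_
      exact mul_le_mul_of_nonneg_left (Real.exp_le_exp.2 (hSbound x hx).1) (hprodnn x)
    have hlow2 : (∫ x in cube, (∏ i, lam0 (x i + t)) * Real.exp ((N : ℝ) * A))
        = P ^ k * Real.exp ((N : ℝ) * A) := by
      rw [integral_mul_const, hprod_integral]
    rw [hE, hPline]
    calc (Δ⁻¹ * P) ^ k * Real.exp ((k : ℝ) * ((k : ℝ) - 1) / 2 * A)
        = Δ⁻¹ ^ k * (P ^ k * Real.exp ((N : ℝ) * A)) := by rw [hcast, mul_pow]; ring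
      _ ≤ _ := mul_le_mul_of_nonneg_left (hlow2 ▸ hlow) hΔk
  · -- upper bound
    have hup : (∫ x in cube, (∏ i, lam0 (x i + t)) *
          Real.exp (∑ p ∈ Finset.univ.filter (fun p : Fin k × Fin k => p.1 < p.2),
            ∫ τ in (0:ℝ)..t, ((x p.1 + τ) * (x p.2 + τ)) ^ (H - 1/2))) ≤
        ∫ x in cube, (∏ i, lam0 (x i + t)) * Real.exp ((N : ℝ) * B) := by
      refine setIntegral_mono_on hintk (hprod_int.mul_const _) hcube fun x hx => ?_
      exact mul_le_mul_of_nonneg_left (Real.exp_le_exp.2 (hSbound x hx).2) (hprodnn x)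
    have hup2 : (∫ x in cube, (∏ i, lam0 (x i + t)) * Real.exp ((N : ℝ) * B))
        = P ^ k * Real.exp ((N : ℝ) * B) := by
      rw [integral_mul_const, hprod_integral]
    rw [hE, hPline]
    calc Δ⁻¹ ^ k * _ ≤ Δ⁻¹ ^ k * (P ^ k * Real.exp ((N : ℝ) * B)) :=
          mul_le_mul_of_nonneg_left (hup2 ▸ hup) hΔk
      _ = (Δ⁻¹ * P) ^ k * Real.exp ((k : ℝ) * ((k : ℝ) - 1) / 2 * B) := by
          rw [hcast, mul_pow]; ring
end
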